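/- Let n ≥ 1 and let ν be a divisor of n. Let t ∈ ℝⁿ whose DFT is supported on multiples of ν, i.e. Σ_{j=0}^{n−1} t_j·exp(−2πi·j·k/n) = 0 for every k ∈ {0,…,n−1} not divisible by ν. Then for every q ∈ ℝ, the vector z ∈ ℝⁿ defined componentwise by z_j = q + max(t_j − q, 0) also has its DFT supported on multiples of ν: Σ_{j=0}^{n−1} z_j·exp(−2πi·j·k/n) = 0 for every k ∈ {0,…,n−1} not divisible by ν. -/

import Mathlib

open scoped BigOperators

noncomputable section

namespace DFTClip

noncomputable def E (n : ℕ) (a : ℤ) : ℂ :=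
  Complex.exp (2 * Real.pi * Complex.I * a / n)

lemma E_add (n : ℕ) (a b : ℤ) : E n (a + b) = E n a * E n b := by
  rw [E, E, E, ← Complex.exp_add]
  congr 1
  push_cast
  ring

lemma E_eq_one_iff {n : ℕ} (hn : 1 ≤ n) (a : ℤ) : E n a = 1 ↔ (n : ℤ) ∣ a := by
  have hn0 : (n : ℂ) ≠ 0 := by
    exact_mod_cast Nat.cast_ne_zero.mpr (by omega)
  rw [E, Complex.exp_eq_one_iff]
  constructor
  · rintro ⟨k, hk⟩
    refine ⟨k, ?_⟩
    have h2 : (2 * Real.pi * Complex.I : ℂ) ≠ 0 := by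
      simp [Real.pi_ne_zero, Complex.I_ne_zero]
    have h3 : (a : ℂ) = k * n := by
      refine mul_left_cancel₀ h2 ?_
      field_simp at hk
      linear_combination (2 * (Real.pi : ℂ) * Complex.I) * hk
    have h4 : a = k * n := by exact_mod_cast h3
    rw [h4, mul_comm]
  · rintro ⟨k, hk⟩
    refine ⟨k, ?_⟩
    rw [hk]
    push_cast
    field_simp

lemma E_congr {n : ℕ} (hn : 1 ≤ n) {a b : ℤ} (h : (n : ℤ) ∣ a - b) : E n a = E n b := by
  have : E n a = E n b * E n (a - b) := by
    rw [← E_add]; congr 1; ring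
  rw [this, (E_eq_one_iff hn _).mpr h, mul_one]

lemma E_pow (n : ℕ) (a : ℤ) (j : ℕ) : E n (a * j) = (E n a) ^ j := by
  rw [E, E, ← Complex.exp_nat_mul]
  congr 1
  push_cast
  ring

lemma orth {n : ℕ} (hn : 1 ≤ n) (c : ℤ) :
    ∑ j : Fin n, E n (c * j) = if (n : ℤ) ∣ c then (n : ℂ) else 0 := by
  have hsum : ∑ j : Fin n, E n (c * j) = ∑ j ∈ Finset.range n, (E n c) ^ j := by
    rw [← Fin.sum_univ_eq_sum_range (fun j => (E n c) ^ j) n]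
    exact Finset.sum_congr rfl fun j _ => E_pow n c j
  by_cases h : (n : ℤ) ∣ c
  · rw [if_pos h, hsum]
    simp [(E_eq_one_iff hn c).mpr h]
  · rw [if_neg h, hsum]
    have hne : E n c ≠ 1 := fun hc => h ((E_eq_one_iff hn c).mp hc)
    rw [geom_sum_eq hne]
    have hpow : (E n c) ^ n = 1 := by
      rw [← E_pow, mul_comm]
      exact (E_eq_one_iff hn _).mpr ⟨c, by ring⟩
    rw [hpow, sub_self, zero_div]

/-- "Inversion": the inner product of the DFT with the inverse characters recovers `n • a`. -/
lemma inversion {n : ℕ} (hn : 1 ≤ n) (a : Fin n → ℂ) (j0 : Fin n) :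
    ∑ k : Fin n, (∑ j : Fin n, a j * E n (-(j * k))) * E n (j0 * k) = n * a j0 := by
  have step1 : ∀ k : Fin n,
      (∑ j : Fin n, a j * E n (-(j * k))) * E n (j0 * k)
        = ∑ j : Fin n, a j * E n (((j0 : ℤ) - (j : ℤ)) * k) := by
    intro k
    rw [Finset.sum_mul]
    refine Finset.sum_congr rfl fun j _ => ?_
    rw [mul_assoc, ← E_add]
    congr 2
    ring
  calc ∑ k : Fin n, (∑ j : Fin n, a j * E n (-(j * k))) * E n (j0 * k)
      = ∑ k : Fin n, ∑ j : Fin n, a j * E n (((j0 : ℤ) - (j : ℤ)) * k) :=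
        Finset.sum_congr rfl fun k _ => step1 k
    _ = ∑ j : Fin n, ∑ k : Fin n, a j * E n (((j0 : ℤ) - (j : ℤ)) * k) := Finset.sum_comm
    _ = ∑ j : Fin n, a j * ∑ k : Fin n, E n (((j0 : ℤ) - (j : ℤ)) * k) := by
        simp [Finset.mul_sum]
    _ = ∑ j : Fin n, a j * (if (n : ℤ) ∣ ((j0 : ℤ) - (j : ℤ)) then (n : ℂ) else 0) := by
        refine Finset.sum_congr rfl fun j _ => ?_
        rw [orth hn]
    _ = n * a j0 := by
        rw [Finset.sum_eq_single j0]
        · simp [mul_comm]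
        · intro j _ hj
          rw [if_neg, mul_zero]
          intro hdvd
          have h0 : (j0 : ℤ) - (j : ℤ) = 0 := by
            refine Int.eq_zero_of_abs_lt_dvd hdvd ?_
            have := j.isLt
            have := j0.isLt
            rw [abs_lt]
            omega
          exact hj (by ext; omega)
        · intro h
          exact absurd (Finset.mem_univ j0) h

def shift {n : ℕ} (m : ℕ) (j : Fin n) : Fin n :=
  ⟨((j : ℕ) + m) % n, Nat.mod_lt _ (by have := j.isLt; omega)⟩

lemma periodic_of_dft {n ν : ℕ} (hn : 1 ≤ n) (hν : ν ∣ n) (a : Fin n → ℂ)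
    (ha : ∀ k : Fin n, ¬ (ν ∣ (k : ℕ)) → ∑ j : Fin n, a j * E n (-(j * k)) = 0) :
    ∀ j : Fin n, a (shift (n / ν) j) = a j := by
  intro j
  set m : ℕ := n / ν with hmdef
  have hν1 : 1 ≤ ν := by
    rcases Nat.eq_zero_or_pos ν with h | h
    · exfalso; rw [h] at hν; omega
    · exact h
  have hm : ν * m = n := Nat.mul_div_cancel' hν
  have hnC : (n : ℂ) ≠ 0 := Nat.cast_ne_zero.mpr (by omega)
  refine mul_left_cancel₀ hnC ?_
  rw [← inversion hn a (shift m j), ← inversion hn a j]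
  refine Finset.sum_congr rfl fun k _ => ?_
  by_cases hk : ν ∣ (k : ℕ)
  · congr 1
    obtain ⟨l, hl⟩ := hk
    refine E_congr hn ?_
    set A : ℕ := ((j : ℕ) + m) % n with hA
    have hsv : ((shift m j : Fin n) : ℕ) = A := rfl
    rw [hsv]
    set e : ℕ := ((j : ℕ) + m) / n with he
    have hAe : A + n * e = (j : ℕ) + m := Nat.mod_add_div _ _
    have hAeZ : (A : ℤ) + n * e = (j : ℤ) + m := by exact_mod_cast hAe
    have hlZ : ((k : ℕ) : ℤ) = (ν : ℤ) * l := by exact_mod_cast hl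
    have hmZ : (ν : ℤ) * m = n := by exact_mod_cast hm
    refine ⟨(l : ℤ) - e * k, ?_⟩
    linear_combination (k : ℤ) * hAeZ + (m : ℤ) * hlZ + (l : ℤ) * hmZ
  · rw [ha k hk, zero_mul, zero_mul]

lemma dft_vanish_of_periodic {n ν : ℕ} (hn : 1 ≤ n) (hν : ν ∣ n) (a : Fin n → ℂ)
    (hp : ∀ j : Fin n, a (shift (n / ν) j) = a j) :
    ∀ k : Fin n, ¬ (ν ∣ (k : ℕ)) → ∑ j : Fin n, a j * E n (-(j * k)) = 0 := by
  intro k hk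
  haveI : NeZero n := ⟨by omega⟩
  set m : ℕ := n / ν with hmdef
  have hν1 : 1 ≤ ν := by
    rcases Nat.eq_zero_or_pos ν with h | h
    · exfalso; rw [h] at hν; omega
    · exact h
  have hm : ν * m = n := Nat.mul_div_cancel' hν
  have hm1 : 1 ≤ m := by
    rcases Nat.eq_zero_or_pos m with h | h
    · exfalso; rw [h, mul_zero] at hm; omega
    · exact h
  set c : Fin n := ⟨m % n, Nat.mod_lt _ (by omega)⟩ with hc
  have hshift : ∀ j : Fin n, j + c = shift m j := by
    intro j
    refine Fin.ext ?_
    show ((j : ℕ) + (m % n)) % n = ((j : ℕ) + m) % n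
    rw [Nat.add_mod_mod]
  set w : ℂ := E n (-((m : ℤ) * (k : ℕ))) with hw
  have hre : ∑ j : Fin n, a j * E n (-((j : ℤ) * (k : ℕ)))
      = ∑ j : Fin n, a (j + c) * E n (-(((j + c : Fin n) : ℤ) * (k : ℕ))) :=
    (Fintype.sum_equiv (Equiv.addRight c)
      (fun j => a (j + c) * E n (-(((j + c : Fin n) : ℤ) * (k : ℕ))))
      (fun j => a j * E n (-((j : ℤ) * (k : ℕ)))) (fun j => rfl)).symm
  have key : (∑ j : Fin n, a j * E n (-((j : ℤ) * (k : ℕ))))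
      = (∑ j : Fin n, a j * E n (-((j : ℤ) * (k : ℕ)))) * w := by
    conv_lhs => rw [hre]
    rw [Finset.sum_mul]
    refine Finset.sum_congr rfl fun j _ => ?_
    rw [hshift j, hp j, mul_assoc]
    congr 1
    have hEE : E n (-((j : ℤ) * (k : ℕ))) * w
        = E n (-((j : ℤ) * (k : ℕ)) + -((m : ℤ) * (k : ℕ))) := (E_add n _ _).symm
    rw [hEE]
    refine E_congr hn ?_
    set B : ℕ := ((j : ℕ) + m % n) % n with hB
    have hsv : ((shift m j : Fin n) : ℕ) = B := by
      show ((j : ℕ) + m) % n = B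
      rw [hB, Nat.add_mod_mod]
    rw [hsv]
    set e1 : ℕ := ((j : ℕ) + m % n) / n with he1
    set e2 : ℕ := m / n with he2
    have hB1 : B + n * e1 = (j : ℕ) + m % n := Nat.mod_add_div _ _
    have hc1 : m % n + n * e2 = m := Nat.mod_add_div _ _
    have hB1Z : (B : ℤ) + n * e1 = (j : ℤ) + ((m % n : ℕ) : ℤ) := by exact_mod_cast hB1
    have hc1Z : ((m % n : ℕ) : ℤ) + n * e2 = (m : ℤ) := by exact_mod_cast hc1
    refine ⟨((e1 : ℤ) + e2) * (k : ℕ), ?_⟩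
    linear_combination (-((k : ℕ) : ℤ)) * hB1Z + (-((k : ℕ) : ℤ)) * hc1Z
  have hw1 : w ≠ 1 := by
    intro h1
    rw [hw, E_eq_one_iff hn] at h1
    have h2 : (n : ℤ) ∣ (m : ℤ) * (k : ℕ) := (dvd_neg).mp h1
    obtain ⟨d, hd⟩ := h2
    have hmZ : (ν : ℤ) * m = n := by exact_mod_cast hm
    have hmne : (m : ℤ) ≠ 0 := by exact_mod_cast (by omega : m ≠ 0)
    have hkd : ((k : ℕ) : ℤ) = ν * d := by
      refine mul_left_cancel₀ hmne ?_
      linear_combination hd - d * hmZ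
    have : (ν : ℤ) ∣ ((k : ℕ) : ℤ) := ⟨d, hkd⟩
    exact hk (by exact_mod_cast this)
  have h0 : (∑ j : Fin n, a j * E n (-((j : ℤ) * (k : ℕ)))) * (1 - w) = 0 := by
    linear_combination key
  rcases mul_eq_zero.mp h0 with h | h
  · exact h
  · exact absurd (sub_eq_zero.mp h).symm hw1

end DFTClip

theorem dft_support_preserved_by_clipping
    (n ν : ℕ) (hn : 1 ≤ n) (hν : ν ∣ n) (t : Fin n → ℝ)
    (ht : ∀ k : Fin n, ¬ (ν ∣ (k : ℕ)) →
      ∑ j : Fin n, (t j : ℂ) *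
        Complex.exp (-(2 * (Real.pi : ℂ) * Complex.I * ((j : ℕ) : ℂ) * ((k : ℕ) : ℂ)) / (n : ℂ)) = 0) :
    ∀ q : ℝ, ∀ k : Fin n, ¬ (ν ∣ (k : ℕ)) →
      ∑ j : Fin n, ((q + max (t j - q) 0 : ℝ) : ℂ) *
        Complex.exp (-(2 * (Real.pi : ℂ) * Complex.I * ((j : ℕ) : ℂ) * ((k : ℕ) : ℂ)) / (n : ℂ)) = 0 := by
  intro q k hk
  have hexp : ∀ (j k : Fin n),
      Complex.exp (-(2 * (Real.pi : ℂ) * Complex.I * ((j : ℕ) : ℂ) * ((k : ℕ) : ℂ)) / (n : ℂ))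
        = DFTClip.E n (-((j : ℤ) * (k : ℕ))) := by
    intro j k
    rw [DFTClip.E]
    congr 1
    push_cast
    ring
  have ha : ∀ k : Fin n, ¬ (ν ∣ (k : ℕ)) →
      ∑ j : Fin n, ((t j : ℂ)) * DFTClip.E n (-(j * k)) = 0 := by
    intro k hk
    rw [← ht k hk]
    exact Finset.sum_congr rfl fun j _ => by rw [hexp j k]
  have hper := DFTClip.periodic_of_dft hn hν (fun j => (t j : ℂ)) ha
  have hperR : ∀ j : Fin n, t (DFTClip.shift (n / ν) j) = t j := fun j =>
    Complex.ofReal_injective (hper j)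
  have hz : ∀ j : Fin n,
      ((fun j => ((q + max (t j - q) 0 : ℝ) : ℂ)) (DFTClip.shift (n / ν) j))
        = (fun j => ((q + max (t j - q) 0 : ℝ) : ℂ)) j := by
    intro j
    simp only [hperR j]
  have := DFTClip.dft_vanish_of_periodic hn hν (fun j => ((q + max (t j - q) 0 : ℝ) : ℂ)) hz k hk
  rw [← this]
  exact Finset.sum_congr rfl fun j _ => by rw [hexp j k]
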